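/- Let Ω ⊂ ℝⁿ be open and f ∈ C²(Ω), with all second partial derivatives continuous (so that f_{ij} = f_{ji}). Then the expression R(f) := Σ_{i,j} (A_i^i A_j^j − A_i^j A_j^i), where A_j^i = ∂_j(f_i/w) and w = √(1+|Df|²), satisfies R(f) = Σ_j ∂_j [ Σ_i (f_{ii} f_j − f_{ij} f_i)/(1+|Df|²) ] at every point where f is three times differentiable. -/

import Mathlib

/-- Quotient rule for Fréchet derivatives of real-valued functions. -/
theorem myDiv {E : Type*} [NormedAddCommGroup E] [NormedSpace ℝ E]
    {c d : E → ℝ} {c' d' : E →L[ℝ] ℝ} {x : E}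
    (hc : HasFDerivAt c c' x) (hd : HasFDerivAt d d' x) (hx : d x ≠ 0) :
    HasFDerivAt (fun y => c y / d y) ((d x)⁻¹ • c' - (c x / d x ^ 2) • d') x := by
  have h := hc.mul ((hasDerivAt_inv hx).comp_hasFDerivAt x hd)
  simp only [div_eq_mul_inv]
  refine h.congr_fderiv ?_
  ext v
  simp only [ContinuousLinearMap.coe_sub', Pi.sub_apply, ContinuousLinearMap.coe_smul',
    Pi.smul_apply, smul_eq_mul, ContinuousLinearMap.add_apply, Function.comp_apply]
  field_simp
  ring

/-- Summing a pairwise-symmetrized identity. -/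
theorem sum_pair {n : ℕ} (L R : Fin n → Fin n → ℝ)
    (h : ∀ i j, L i j + L j i = R i j + R j i) :
    ∑ i, ∑ j, L i j = ∑ j, ∑ i, R i j := by
  have hL : ∑ i, ∑ j, L j i = ∑ i, ∑ j, L i j := Finset.sum_comm
  have hR : ∑ i, ∑ j, R j i = ∑ i, ∑ j, R i j := Finset.sum_comm
  have hRR : ∑ j, ∑ i, R i j = ∑ i, ∑ j, R i j := Finset.sum_comm
  have h2 : ∑ i, ∑ j, (L i j + L j i) = ∑ i, ∑ j, (R i j + R j i) :=
    Finset.sum_congr rfl fun i _ => Finset.sum_congr rfl fun j _ => h i j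
  simp only [Finset.sum_add_distrib] at h2
  rw [hRR]
  linarith

set_option maxHeartbeats 1000000 in
/-- Proposition 5.3 (Lam): the scalar curvature of the graph of `f`, expressed
extrinsically as `R(f) = Σ_{i,j}(A_i^i A_j^j − A_i^j A_j^i)` with
`A_j^i = ∂_j(f_i/w)`, `w = √(1+|Df|²)`, has the divergence form
`R(f) = Σ_j ∂_j [ Σ_i (f_{ii}f_j − f_{ij}f_i)/(1+|Df|²) ]` on the open set
where `f` is `C³`. -/
theorem stmt7 (n : ℕ) (hn : 1 ≤ n) (Ω : Set (Fin n → ℝ)) (hΩ : IsOpen Ω)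
    (f : (Fin n → ℝ) → ℝ) (hf : ContDiffOn ℝ 3 f Ω) (p : Fin n → ℝ) (hp : p ∈ Ω) :
    let F : Fin n → (Fin n → ℝ) → ℝ := fun i x => fderiv ℝ f x (Pi.single i 1)
    let S : Fin n → Fin n → (Fin n → ℝ) → ℝ :=
      fun i j x => fderiv ℝ (F i) x (Pi.single j 1)
    let w : (Fin n → ℝ) → ℝ := fun x => Real.sqrt (1 + ∑ l, (F l x) ^ 2)
    let A : Fin n → Fin n → (Fin n → ℝ) → ℝ :=
      fun i j x => fderiv ℝ (fun y => F i y / w y) x (Pi.single j 1)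
    (∑ i, ∑ j, (A i i p * A j j p - A i j p * A j i p)) =
      ∑ j, fderiv ℝ
        (fun y => ∑ i, (S i i y * F j y - S i j y * F i y) / (1 + ∑ l, (F l y) ^ 2))
        p (Pi.single j 1) := by
  intro F S w A
  set e : Fin n → (Fin n → ℝ) := fun i => Pi.single i 1 with he
  set g2 : (Fin n → ℝ) → ((Fin n → ℝ) →L[ℝ] ((Fin n → ℝ) →L[ℝ] ℝ)) :=
    fderiv ℝ (fderiv ℝ f) with hg2
  set g3 := fderiv ℝ g2 with hg3
  -- basic smoothness facts
  have hc3 : ∀ x ∈ Ω, ContDiffAt ℝ 3 f x := fun x hx => hf.contDiffAt (hΩ.mem_nhds hx)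
  have hc2 : ∀ x ∈ Ω, ContDiffAt ℝ 2 (fderiv ℝ f) x := fun x hx =>
    (hc3 x hx).fderiv_right (by norm_num)
  have hc1 : ∀ x ∈ Ω, ContDiffAt ℝ 1 g2 x := fun x hx =>
    (hc2 x hx).fderiv_right (by norm_num)
  have hg2d : ∀ x ∈ Ω, DifferentiableAt ℝ g2 x := fun x hx =>
    (hc1 x hx).differentiableAt (by norm_num)
  -- derivative of F i
  have hFder : ∀ i, ∀ x ∈ Ω, HasFDerivAt (F i)
      ((ContinuousLinearMap.apply ℝ ℝ (e i)).comp (g2 x)) x := by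
    intro i x hx
    exact (ContinuousLinearMap.apply ℝ ℝ (e i)).hasFDerivAt.comp x
      (((hc2 x hx).differentiableAt (by norm_num)).hasFDerivAt)
  -- values of S
  have hSeq : ∀ i j, ∀ x ∈ Ω, S i j x = g2 x (e j) (e i) := by
    intro i j x hx
    show fderiv ℝ (F i) x (e j) = _
    rw [(hFder i x hx).fderiv]
    rfl
  -- derivative of S i j at p
  have hSder : ∀ i j, HasFDerivAt (S i j)
      ((ContinuousLinearMap.apply ℝ ℝ (e i)).comp
        ((ContinuousLinearMap.apply ℝ ((Fin n → ℝ) →L[ℝ] ℝ) (e j)).comp (g3 p))) p := by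
    intro i j
    have h1 := (ContinuousLinearMap.apply ℝ ℝ (e i)).hasFDerivAt.comp p
        ((ContinuousLinearMap.apply ℝ ((Fin n → ℝ) →L[ℝ] ℝ) (e j)).hasFDerivAt.comp (f := g2) p
          (hg2d p hp).hasFDerivAt)
    apply h1.congr_of_eventuallyEq
    filter_upwards [hΩ.mem_nhds hp] with x hx
    exact hSeq i j x hx
  -- symmetry of second derivatives
  have hsymx : ∀ x ∈ Ω, ∀ v w', g2 x v w' = g2 x w' v := fun x hx =>
    (hc3 x hx).isSymmSndFDerivAt (by norm_num)
  have hssym : ∀ i j, g2 p (e j) (e i) = g2 p (e i) (e j) := fun i j =>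
    hsymx p hp (e j) (e i)
  -- symmetry of third derivatives: swap of the first two slots
  have hT1 : ∀ i j k, g3 p (e k) (e j) (e i) = g3 p (e j) (e k) (e i) := by
    intro i j k
    have h := ((hc2 p hp).isSymmSndFDerivAt (by simp [minSmoothness_of_isRCLikeNormedField])) (e k) (e j)
    rw [show fderiv ℝ (fderiv ℝ (fderiv ℝ f)) = g3 from rfl] at h
    rw [h]
  -- swap of the last two slots
  have hT2 : ∀ i j k, g3 p (e k) (e j) (e i) = g3 p (e k) (e i) (e j) := by
    intro i j k
    have heq : S i j =ᶠ[nhds p] S j i := by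
      filter_upwards [hΩ.mem_nhds hp] with x hx
      rw [hSeq i j x hx, hSeq j i x hx]
      exact hsymx x hx (e j) (e i)
    have h := ((hSder j i).congr_of_eventuallyEq heq).unique (hSder i j)
    have h2 := congrArg (fun (L : (Fin n → ℝ) →L[ℝ] ℝ) => L (e k)) h
    simpa using h2.symm
  -- positivity of the conformal factor
  have hQ0 : (0:ℝ) < 1 + ∑ l, (F l p) ^ 2 := by positivity
  have hW0 : 0 < w p := Real.sqrt_pos.mpr hQ0
  have hW2 : w p ^ 2 = 1 + ∑ l, (F l p) ^ 2 := Real.sq_sqrt hQ0.le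
  -- derivative of the squared gradient term
  set LQ : (Fin n → ℝ) →L[ℝ] ℝ :=
    ∑ l, ((F l p) • ((ContinuousLinearMap.apply ℝ ℝ (e l)).comp (g2 p)) +
      (F l p) • ((ContinuousLinearMap.apply ℝ ℝ (e l)).comp (g2 p))) with hLQ
  have hQder : HasFDerivAt (fun x => 1 + ∑ l, (F l x) ^ 2) LQ p := by
    have h1 : HasFDerivAt (fun x => 1 + ∑ l, F l x * F l x) LQ p :=
      (HasFDerivAt.fun_sum (fun l _ => (hFder l p hp).mul (hFder l p hp))).const_add 1
    exact h1.congr_of_eventuallyEq (Filter.Eventually.of_forall fun x => by simp [sq])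
  have hLQval : ∀ j, LQ (e j) = 2 * ∑ l, F l p * g2 p (e j) (e l) := by
    intro j
    rw [hLQ]
    simp only [ContinuousLinearMap.sum_apply, ContinuousLinearMap.add_apply,
      ContinuousLinearMap.coe_smul', Pi.smul_apply, ContinuousLinearMap.coe_comp',
      Function.comp_apply, ContinuousLinearMap.apply_apply, smul_eq_mul]
    rw [Finset.mul_sum]
    exact Finset.sum_congr rfl fun l _ => by ring
  have hwder : HasFDerivAt w ((1 / (2 * w p)) • LQ) p := hQder.sqrt (ne_of_gt hQ0)
  -- value of the shape operator entries
  have hAval : ∀ i j, A i j p = g2 p (e j) (e i) / w p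
      - F i p * (∑ l, F l p * g2 p (e j) (e l)) / w p ^ 3 := by
    intro i j
    show fderiv ℝ (fun y => F i y / w y) p (e j) = _
    rw [(myDiv (hFder i p hp) hwder hW0.ne').fderiv]
    simp only [ContinuousLinearMap.sub_apply, ContinuousLinearMap.coe_smul', Pi.smul_apply,
      ContinuousLinearMap.coe_comp', Function.comp_apply, ContinuousLinearMap.apply_apply,
      smul_eq_mul, hLQval]
    field_simp
  have hSval : ∀ i j, S i j p = g2 p (e j) (e i) := fun i j => hSeq i j p hp
  -- value of the divergence-form right-hand side
  have hRHSval : ∀ j, fderiv ℝ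
      (fun y => ∑ i, (S i i y * F j y - S i j y * F i y) / (1 + ∑ l, (F l y) ^ 2))
      p (Pi.single j 1) = ∑ i,
        ((w p ^ 2)⁻¹ * ((S i i p * g2 p (e j) (e j) + F j p * g3 p (e j) (e i) (e i))
          - (S i j p * g2 p (e j) (e i) + F i p * g3 p (e j) (e j) (e i)))
          - ((S i i p * F j p - S i j p * F i p) / (w p ^ 2) ^ 2)
            * (2 * ∑ l, F l p * g2 p (e j) (e l))) := by
    intro j
    have hsum : HasFDerivAt
        (fun y => ∑ i, (S i i y * F j y - S i j y * F i y) / (1 + ∑ l, (F l y) ^ 2))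
        (∑ i, ((1 + ∑ l, (F l p) ^ 2)⁻¹ •
          ((S i i p • ((ContinuousLinearMap.apply ℝ ℝ (e j)).comp (g2 p)) +
            F j p • ((ContinuousLinearMap.apply ℝ ℝ (e i)).comp
              ((ContinuousLinearMap.apply ℝ ((Fin n → ℝ) →L[ℝ] ℝ) (e i)).comp (g3 p)))) -
           (S i j p • ((ContinuousLinearMap.apply ℝ ℝ (e i)).comp (g2 p)) +
            F i p • ((ContinuousLinearMap.apply ℝ ℝ (e i)).comp
              ((ContinuousLinearMap.apply ℝ ((Fin n → ℝ) →L[ℝ] ℝ) (e j)).comp (g3 p))))) -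
          ((S i i p * F j p - S i j p * F i p) / (1 + ∑ l, (F l p) ^ 2) ^ 2) • LQ)) p :=
      HasFDerivAt.fun_sum fun i _ =>
        myDiv (((hSder i i).mul (hFder j p hp)).sub ((hSder i j).mul (hFder i p hp)))
          hQder hQ0.ne'
    rw [hsum.fderiv]
    rw [show (Pi.single j 1 : Fin n → ℝ) = e j from rfl]
    rw [hW2]
    simp only [ContinuousLinearMap.sum_apply, ContinuousLinearMap.sub_apply,
      ContinuousLinearMap.add_apply, ContinuousLinearMap.coe_smul', Pi.smul_apply,
      ContinuousLinearMap.coe_comp', Function.comp_apply, ContinuousLinearMap.apply_apply,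
      smul_eq_mul, hLQval]
  -- reduce to a pointwise symmetric algebraic identity
  simp only [hAval, hRHSval, hSval]
  refine sum_pair _ _ fun i j => ?_
  have k1 : g3 p (e i) (e j) (e j) = g3 p (e j) (e j) (e i) := (hT1 j j i).trans (hT2 j i j)
  have k2 : g3 p (e i) (e i) (e j) = g3 p (e j) (e i) (e i) := (hT2 j i i).trans (hT1 i j i)
  rw [k1, k2, hssym i j]
  field_simp
  ring
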